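/- Let E be a Euclidean Jordan algebra with identity e of rank r, and let K be its cone of squares. Suppose e = α₁d₁ + ⋯ + α_m d_m where each α_i > 0 and each d_i is a primitive idempotent. Then α_i ≤ 1 for all i, and consequently m ≥ r = trace(e). -/

import Mathlib

/-- A Euclidean Jordan algebra structure on a finite-dimensional real inner ℝ product
space `E`: a commutative bilinear product satisfying the Jordan identity, compatible with
the inner ℝ product, and possessing an identity element. -/
structure EuclideanJordanAlgebra (E : Type*) [NormedAddCommGroup E]
    [InnerProductSpace ℝ E] [FiniteDimensional ℝ E] where
  /-- the Jordan product -/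
  mul : E → E → E
  mul_comm : ∀ x y, mul x y = mul y x
  mul_add : ∀ x y z, mul x (y + z) = mul x y + mul x z
  mul_smul : ∀ (c : ℝ) (x y : E), mul x (c • y) = c • mul x y
  jordan : ∀ x y, mul x (mul (mul x x) y) = mul (mul x x) (mul x y)
  inner_assoc : ∀ x y z, (inner ℝ (mul x y) z : ℝ) = inner ℝ y (mul x z)
  one : E
  one_mul : ∀ x, mul one x = x

/-- The cone of squares of a Euclidean Jordan algebra. -/
def EuclideanJordanAlgebra.coneOfSquares {E : Type*} [NormedAddCommGroup E]
    [InnerProductSpace ℝ E] [FiniteDimensional ℝ E] (J : EuclideanJordanAlgebra E) : Set E :=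
  {x | ∃ z : E, x = J.mul z z}

/-- An idempotent of a Euclidean Jordan algebra. -/
def EuclideanJordanAlgebra.IsIdempotent {E : Type*} [NormedAddCommGroup E]
    [InnerProductSpace ℝ E] [FiniteDimensional ℝ E] (J : EuclideanJordanAlgebra E)
    (c : E) : Prop :=
  J.mul c c = c

/-- A primitive idempotent: a nonzero idempotent which is not the sum of two nonzero
orthogonal idempotents. -/
def EuclideanJordanAlgebra.IsPrimitiveIdempotent {E : Type*} [NormedAddCommGroup E]
    [InnerProductSpace ℝ E] [FiniteDimensional ℝ E] (J : EuclideanJordanAlgebra E)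
    (c : E) : Prop :=
  J.IsIdempotent c ∧ c ≠ 0 ∧
    ¬∃ a b : E, a ≠ 0 ∧ b ≠ 0 ∧ J.IsIdempotent a ∧ J.IsIdempotent b ∧
      J.mul a b = 0 ∧ c = a + b


section Aux
variable {E : Type*} [NormedAddCommGroup E] [InnerProductSpace ℝ E] [FiniteDimensional ℝ E]
  (J : EuclideanJordanAlgebra E)

lemma EJA.add_mul (x y z : E) : J.mul (x + y) z = J.mul x z + J.mul y z := by
  rw [J.mul_comm, J.mul_add, J.mul_comm z x, J.mul_comm z y]

lemma EJA.smul_mul (c : ℝ) (x y : E) : J.mul (c • x) y = c • J.mul x y := by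
  rw [J.mul_comm, J.mul_smul, J.mul_comm]

lemma EJA.mul_neg (x y : E) : J.mul x (-y) = -J.mul x y := by
  have := J.mul_smul (-1) x y; simpa using this

lemma EJA.neg_mul (x y : E) : J.mul (-x) y = -J.mul x y := by
  rw [J.mul_comm, EJA.mul_neg, J.mul_comm]

lemma EJA.mul_sub (x y z : E) : J.mul x (y - z) = J.mul x y - J.mul x z := by
  rw [sub_eq_add_neg, J.mul_add, EJA.mul_neg, sub_eq_add_neg]

lemma EJA.sub_mul (x y z : E) : J.mul (x - y) z = J.mul x z - J.mul y z := by
  rw [J.mul_comm, EJA.mul_sub, J.mul_comm z x, J.mul_comm z y]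

/-- Polarized Jordan identity. -/
lemma EJA.pol (a b y : E) :
    (2:ℝ) • J.mul a (J.mul (J.mul a b) y) + J.mul b (J.mul (J.mul a a) y) =
      J.mul (J.mul a a) (J.mul b y) + (2:ℝ) • J.mul (J.mul a b) (J.mul a y) := by
  have h1 := J.jordan (a + b) y
  have h2 := J.jordan (a - b) y
  have h4 := J.jordan b y
  simp only [J.mul_add, EJA.add_mul, EJA.mul_sub, EJA.sub_mul] at h1 h2
  have hc : J.mul b a = J.mul a b := J.mul_comm b a
  rw [hc] at h1 h2
  -- h1 - h2 gives twice an identity; combine with h4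
  have key : (2:ℝ) • (J.mul a (J.mul (J.mul a b) y) + J.mul a (J.mul (J.mul a b) y)
        + J.mul b (J.mul (J.mul a a) y) + J.mul b (J.mul (J.mul b b) y)) =
      (2:ℝ) • (J.mul (J.mul a a) (J.mul b y) + J.mul (J.mul a b) (J.mul a y)
        + J.mul (J.mul a b) (J.mul a y) + J.mul (J.mul b b) (J.mul b y)) := by
    have := congrArg₂ (· - ·) h1 h2
    simp only [two_smul]
    abel_nf
    abel_nf at this
    linear_combination (norm := abel) this
  have key2 := smul_right_injective E (by norm_num : (2:ℝ) ≠ 0) key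
  have : J.mul b (J.mul (J.mul b b) y) = J.mul (J.mul b b) (J.mul b y) := h4
  simp only [two_smul]
  linear_combination (norm := abel) key2 - h4

/-- Cubic identity for idempotents: 2 L_d^3 = 3 L_d^2 - L_d. -/
lemma EJA.cubic {d : E} (hd : J.mul d d = d) (u : E) :
    (2:ℝ) • J.mul d (J.mul d (J.mul d u)) = (3:ℝ) • J.mul d (J.mul d u) - J.mul d u := by
  have h := EJA.pol J d u d
  simp only [hd, J.mul_comm u d] at h
  rw [J.mul_comm (J.mul d u) d] at h
  have h3 : (3:ℝ) • J.mul d (J.mul d u)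
      = J.mul d (J.mul d u) + (2:ℝ) • J.mul d (J.mul d u) := by module
  rw [h3, eq_sub_iff_add_eq]
  exact h

/-- L_d is positive semidefinite for idempotent d. -/
lemma EJA.psd {d : E} (hd : J.mul d d = d) (c : E) :
    0 ≤ (inner ℝ (J.mul d c) c : ℝ) := by
  have sa : ∀ x y : E, (inner ℝ (J.mul d x) y : ℝ) = inner ℝ x (J.mul d y) := fun x y =>
    J.inner_assoc d x y
  obtain ⟨u1, hu1⟩ : ∃ u1, J.mul d c = u1 := ⟨_, rfl⟩
  obtain ⟨u2, hu2⟩ : ∃ u2, J.mul d u1 = u2 := ⟨_, rfl⟩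
  obtain ⟨u3, hu3⟩ : ∃ u3, J.mul d u2 = u3 := ⟨_, rfl⟩
  obtain ⟨u4, hu4⟩ : ∃ u4, J.mul d u3 = u4 := ⟨_, rfl⟩
  have r1 : (2:ℝ) • u3 = (3:ℝ) • u2 - u1 := by
    have := EJA.cubic J hd c
    rw [hu1, hu2, hu3] at this; exact this
  have r2 : (2:ℝ) • u4 = (3:ℝ) • u3 - u2 := by
    have := EJA.cubic J hd u1
    rw [hu2, hu3, hu4] at this; exact this
  have e11 : (inner ℝ u1 u1 : ℝ) = inner ℝ u2 c := by
    calc (inner ℝ u1 u1 : ℝ) = inner ℝ (J.mul d c) u1 := by rw [hu1]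
      _ = inner ℝ c (J.mul d u1) := sa _ _
      _ = inner ℝ u2 c := by rw [hu2, real_inner_comm]
  have e21 : (inner ℝ u2 u1 : ℝ) = inner ℝ u3 c := by
    calc (inner ℝ u2 u1 : ℝ) = inner ℝ u1 u2 := real_inner_comm _ _
      _ = inner ℝ (J.mul d c) u2 := by rw [hu1]
      _ = inner ℝ c (J.mul d u2) := sa _ _
      _ = inner ℝ u3 c := by rw [hu3, real_inner_comm]
  have e22 : (inner ℝ u2 u2 : ℝ) = inner ℝ u4 c := by
    calc (inner ℝ u2 u2 : ℝ) = inner ℝ (J.mul d u1) u2 := by rw [hu2]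
      _ = inner ℝ u1 (J.mul d u2) := sa _ _
      _ = inner ℝ u3 u1 := by rw [hu3, real_inner_comm]
      _ = inner ℝ u3 (J.mul d c) := by rw [hu1]
      _ = inner ℝ (J.mul d u3) c := (sa _ _).symm
      _ = inner ℝ u4 c := by rw [hu4]
  have f1 : 2 * (inner ℝ u3 c : ℝ) = 3 * inner ℝ u2 c - inner ℝ u1 c := by
    have := congrArg (fun v => (inner ℝ v c : ℝ)) r1
    simpa [inner_smul_left, inner_sub_left] using this
  have f2 : 2 * (inner ℝ u4 c : ℝ) = 3 * inner ℝ u3 c - inner ℝ u2 c := by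
    have := congrArg (fun v => (inner ℝ v c : ℝ)) r2
    simpa [inner_smul_left, inner_sub_left] using this
  set s := Real.sqrt 2 with hsdef
  have hs : s * s = 2 := Real.mul_self_sqrt (by norm_num)
  have hww : 0 ≤ (inner ℝ ((2 - 2*s) • u2 + (2*s - 1) • u1)
      ((2 - 2*s) • u2 + (2*s - 1) • u1) : ℝ) := real_inner_self_nonneg
  have hwexp : (inner ℝ ((2 - 2*s) • u2 + (2*s - 1) • u1)
      ((2 - 2*s) • u2 + (2*s - 1) • u1) : ℝ)
      = (2-2*s)^2 * inner ℝ u2 u2 + 2*((2-2*s)*(2*s-1)) * inner ℝ u2 u1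
        + (2*s-1)^2 * inner ℝ u1 u1 := by
    simp only [inner_add_left, inner_add_right, real_inner_smul_left, real_inner_smul_right]
    rw [real_inner_comm u1 u2]
    ring
  have key : (inner ℝ u1 c : ℝ) = inner ℝ ((2 - 2*s) • u2 + (2*s - 1) • u1)
      ((2 - 2*s) • u2 + (2*s - 1) • u1) := by
    rw [hwexp, e11, e21, e22]
    linear_combination (-(2 - 4*s + 2*s^2)) * f2 + (-(1 - s^2)) * f1
      + ((inner ℝ u2 c : ℝ) - inner ℝ u1 c) * hs
  rw [hu1, key]
  exact hww

end Aux
/-- Let `E` be a Euclidean Jordan algebra of rank `r` with identity `e`, and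
let `τ` be the trace form, which is linear, takes the value 1 on primitive idempotents and
the value `r` on `e`. If `e = α₁ d₁ + ⋯ + α_m d_m` with each `α_i > 0` and each `d_i` a
primitive idempotent, then `α_i ≤ 1` for all `i`, and consequently `m ≥ r = trace e`. -/
theorem caratheodory_stmt18 {E : Type*} [NormedAddCommGroup E]
    [InnerProductSpace ℝ E] [FiniteDimensional ℝ E] (J : EuclideanJordanAlgebra E)
    (r : ℕ) (τ : E →ₗ[ℝ] ℝ)
    (hτprim : ∀ c : E, J.IsPrimitiveIdempotent c → τ c = 1)
    (hτe : τ J.one = r)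
    (m : ℕ) (α : Fin m → ℝ) (d : Fin m → E)
    (hα : ∀ i, 0 < α i)
    (hd : ∀ i, J.IsPrimitiveIdempotent (d i))
    (hdecomp : J.one = ∑ i, α i • d i) :
    (∀ i, α i ≤ 1) ∧ r ≤ m := by
  have psd : ∀ i j : Fin m, 0 ≤ (inner ℝ (d j) (d i) : ℝ) := by
    intro i j
    have hji : J.mul (d i) (d i) = d i := (hd i).1
    have heq : (inner ℝ (d j) (d i) : ℝ) = inner ℝ (J.mul (d j) (d i)) (d i) := by
      calc (inner ℝ (d j) (d i) : ℝ) = inner ℝ (d i) (d j) := real_inner_comm _ _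
        _ = inner ℝ (J.mul (d i) (d i)) (d j) := by rw [hji]
        _ = inner ℝ (d i) (J.mul (d i) (d j)) := J.inner_assoc _ _ _
        _ = inner ℝ (J.mul (d i) (d j)) (d i) := real_inner_comm _ _
        _ = inner ℝ (J.mul (d j) (d i)) (d i) := by rw [J.mul_comm]
    rw [heq]
    exact EJA.psd J (hd j).1 (d i)
  have hle : ∀ i, α i ≤ 1 := by
    intro i
    have hdi : J.mul (d i) (d i) = d i := (hd i).1
    have hne : d i ≠ 0 := (hd i).2.1
    have hpos : 0 < (inner ℝ (d i) (d i) : ℝ) :=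
      real_inner_self_nonneg.lt_of_ne' fun h => hne (inner_self_eq_zero.mp h)
    have hone : (inner ℝ J.one (d i) : ℝ) = inner ℝ (d i) (d i) := by
      calc (inner ℝ J.one (d i) : ℝ) = inner ℝ J.one (J.mul (d i) (d i)) := by rw [hdi]
        _ = inner ℝ (J.mul (d i) J.one) (d i) := (J.inner_assoc (d i) J.one (d i)).symm
        _ = inner ℝ (d i) (d i) := by rw [J.mul_comm, J.one_mul]
    have hsum : (inner ℝ J.one (d i) : ℝ) = ∑ j, α j * inner ℝ (d j) (d i) := by
      rw [hdecomp, sum_inner]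
      exact Finset.sum_congr rfl fun j _ => real_inner_smul_left _ _ _
    have hge : α i * (inner ℝ (d i) (d i) : ℝ) ≤ ∑ j, α j * inner ℝ (d j) (d i) :=
      Finset.single_le_sum (f := fun j => α j * (inner ℝ (d j) (d i) : ℝ))
        (fun j _ => mul_nonneg (hα j).le (psd i j)) (Finset.mem_univ i)
    nlinarith [hge, hone, hsum, hpos]
  refine ⟨hle, ?_⟩
  have hr : (r : ℝ) = ∑ i, α i := by
    rw [← hτe, hdecomp, map_sum]
    refine Finset.sum_congr rfl fun i _ => ?_
    rw [map_smul, hτprim _ (hd i)]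
    simp
  have hrm : (r : ℝ) ≤ m := by
    rw [hr]
    calc ∑ i, α i ≤ ∑ _i : Fin m, (1:ℝ) := Finset.sum_le_sum fun i _ => hle i
      _ = m := by simp
  exact_mod_cast hrm
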